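/- The Spearman's rho of the copula C(v₁,v₂) = v₁v₂[1 - r(1-v₁^{1/λ₁})(1-v₂^{1/λ₂})]^{-λ}, with λ₁ ≥ λ > 0, λ₂ ≥ λ, 0 ≤ r < 1, equals ρ_S = 3[₃F₂(1,1,λ; 2λ₁+1, 2λ₂+1; r) - 1] = [3λ/((2λ₁+1)(2λ₂+1))] · r · ₃F₂(1,2,λ+1; 2λ₁+2, 2λ₂+2; r). -/

import Mathlib

open MeasureTheory Real Set

noncomputable def poch (a : ℝ) (n : ℕ) : ℝ := (ascPochhammer ℝ n).eval a

/-- The generalized hypergeometric function `₃F₂(a₁,a₂,a₃;b₁,b₂;z)`. -/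
noncomputable def F32 (a₁ a₂ a₃ b₁ b₂ z : ℝ) : ℝ :=
  ∑' k : ℕ, (poch a₁ k * poch a₂ k * poch a₃ k) / (poch b₁ k * poch b₂ k) *
    z ^ k / k.factorial

set_option linter.unusedSectionVars false

lemma poch_zero (a : ℝ) : poch a 0 = 1 := by simp [poch]
lemma poch_succ (a : ℝ) (n : ℕ) : poch a (n+1) = poch a n * (a + n) := by
  simp [poch, ascPochhammer_succ_eval]
lemma poch_succ_left (a : ℝ) (n : ℕ) : poch a (n+1) = a * poch (a+1) n := by
  simp [poch, ascPochhammer_succ_left, Polynomial.eval_comp]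
lemma poch_pos {a : ℝ} (ha : 0 < a) (n : ℕ) : 0 < poch a n := ascPochhammer_pos n a ha
lemma poch_one (n : ℕ) : poch 1 n = n.factorial := by
  induction n with
  | zero => simp [poch_zero]
  | succ k ih => rw [poch_succ, ih, Nat.factorial_succ]; push_cast; ring
lemma poch_two (n : ℕ) : poch 2 n = (n+1).factorial := by
  induction n with
  | zero => simp [poch_zero]
  | succ k ih =>
    rw [poch_succ, ih, Nat.factorial_succ (k+1)]; push_cast; ring
lemma poch_mono {a b : ℝ} (ha : 0 < a) (hab : a ≤ b) (n : ℕ) : poch a n ≤ poch b n := by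
  induction n with
  | zero => simp [poch_zero]
  | succ k ih =>
    rw [poch_succ, poch_succ]
    have := poch_pos ha k
    have h2 : (0:ℝ) ≤ a + k := by positivity
    apply mul_le_mul ih (by linarith) h2 (le_of_lt (lt_of_lt_of_le (poch_pos ha k) ih)) |>.trans_eq rfl
lemma poch_nonneg {a : ℝ} (ha : 0 < a) (n : ℕ) : 0 ≤ poch a n := (poch_pos ha n).le

section binom
variable {lam x : ℝ} (hlam : 0 < lam) (hx0 : 0 ≤ x) (hx1 : x < 1)

lemma contOn (p : ℝ) (n : ℕ) (hx1 : x < 1) :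
    ContinuousOn (fun t => (x - t)^n * (1 - t) ^ p) (Icc 0 x) := by
  apply ContinuousOn.mul
  · exact ((continuousOn_const.sub continuousOn_id).pow n)
  · apply ContinuousOn.rpow_const (continuousOn_const.sub continuousOn_id)
    intro t ht
    exact Or.inl (by simp only [Pi.sub_apply, id]; nlinarith [ht.2])

include hlam hx0 hx1 in
lemma key_identity (n : ℕ) :
    (1 - x) ^ (-lam) = (∑ k ∈ Finset.range (n+1), poch lam k * x ^ k / k.factorial) +
      poch lam (n+1) / n.factorial * ∫ t in (0:ℝ)..x, (x - t)^n * (1 - t) ^ (-(lam + n + 1)) := by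
  have hIcc : uIcc (0:ℝ) x = Icc 0 x := uIcc_of_le hx0
  induction n with
  | zero =>
    have hftc : ∫ t in (0:ℝ)..x, lam * (1 - t) ^ (-(lam + 0 + 1)) =
        (fun t => (1 - t) ^ (-lam)) x - (fun t => (1 - t) ^ (-lam)) 0 := by
      apply intervalIntegral.integral_eq_sub_of_hasDerivAt
      · intro t ht
        rw [hIcc] at ht
        have h1t : (0:ℝ) < 1 - t := by nlinarith [ht.2]
        have hsub : HasDerivAt (fun t : ℝ => 1 - t) (-1) t := by
          exact (hasDerivAt_id' t).const_sub (1:ℝ)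
        have hd := (Real.hasDerivAt_rpow_const (p := -lam) (Or.inl h1t.ne')).comp t hsub
        refine hd.congr_deriv ?_
        rw [show -lam - 1 = -(lam + 0 + 1) by ring]
        ring
      · apply ContinuousOn.intervalIntegrable
        rw [hIcc]
        exact (continuousOn_const.mul ((contOn (-(lam + 0 + 1)) 0 hx1).congr (by intro t _; simp)))
    rw [intervalIntegral.integral_const_mul] at hftc
    simp only [Finset.range_one, Finset.sum_singleton, poch_zero, pow_zero, Nat.factorial_zero,
      Nat.cast_zero, one_mul, Nat.factorial_zero] at *
    rw [show poch lam (0+1) = lam by rw [poch_succ, poch_zero]; push_cast; ring]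
    have h1 : ((1:ℝ) - 0) ^ (-lam) = 1 := by norm_num
    simp only [h1] at hftc
    simp only [zero_add, Finset.range_one, Finset.sum_singleton, poch_zero, pow_zero,
      Nat.factorial_zero, Nat.cast_one, Nat.cast_zero]
    rw [show -(lam + 0 + 1) = -1 + -lam by ring] at hftc ⊢
    field_simp
    linarith [hftc]
  | succ n ih =>
    rw [Finset.sum_range_succ, ih]
    have hA : poch lam (n+1) / n.factorial * ∫ t in (0:ℝ)..x, (x - t)^n * (1 - t) ^ (-(lam + n + 1))
        = poch lam (n+1) * x ^ (n+1) / (n+1).factorial +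
          poch lam (n+1+1) / (n+1).factorial *
            ∫ t in (0:ℝ)..x, (x - t)^(n+1) * (1 - t) ^ (-(lam + (n+1:ℕ) + 1)) := by
      have hexp : -(lam + ((n+1:ℕ):ℝ) + 1) = -(lam + n + 2) := by push_cast; ring
      rw [hexp]
      have int1 : IntervalIntegrable
          (fun t => (-((n:ℝ)+1)) * ((x - t)^n * (1 - t) ^ (-(lam + n + 1)))) volume 0 x := by
        apply ContinuousOn.intervalIntegrable; rw [hIcc]
        exact continuousOn_const.mul (contOn _ _ hx1)
      have int2 : IntervalIntegrable
          (fun t => (lam + n + 1) * ((x - t)^(n+1) * (1 - t) ^ (-(lam + n + 2)))) volume 0 x := by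
        apply ContinuousOn.intervalIntegrable; rw [hIcc]
        exact continuousOn_const.mul (contOn _ _ hx1)
      have hftc : ∫ t in (0:ℝ)..x,
          ((-((n:ℝ)+1)) * ((x - t)^n * (1 - t) ^ (-(lam + n + 1)))
            + (lam + n + 1) * ((x - t)^(n+1) * (1 - t) ^ (-(lam + n + 2)))) =
          (fun t => (x - t)^(n+1) * (1 - t) ^ (-(lam + n + 1))) x
            - (fun t => (x - t)^(n+1) * (1 - t) ^ (-(lam + n + 1))) 0 := by
        refine intervalIntegral.integral_eq_sub_of_hasDerivAt
          (f := fun t => (x - t)^(n+1) * (1 - t) ^ (-(lam + n + 1)))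
          (fun t ht => ?_) (int1.add int2)
        · 
          rw [hIcc] at ht
          have h1t : (0:ℝ) < 1 - t := by nlinarith [ht.2]
          have hsub1 : HasDerivAt (fun t : ℝ => x - t) (-1) t := by
            exact (hasDerivAt_id' t).const_sub x
          have h1 : HasDerivAt (fun t : ℝ => (x - t)^(n+1)) ((↑(n+1) : ℝ) * (x - t)^n * (-1)) t := by
            simpa using hsub1.fun_pow (n+1)
          have hsub2 : HasDerivAt (fun t : ℝ => 1 - t) (-1) t := by
            exact (hasDerivAt_id' t).const_sub (1:ℝ)
          have h2 : HasDerivAt (fun t : ℝ => (1 - t) ^ (-(lam + n + 1)))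
              ((-(lam + n + 1)) * (1 - t) ^ (-(lam + n + 1) - 1) * (-1)) t :=
            (Real.hasDerivAt_rpow_const (Or.inl h1t.ne')).comp t hsub2
          have hmul := h1.mul h2
          refine hmul.congr_deriv ?_
          rw [show -(lam + (n:ℝ) + 1) - 1 = -(lam + n + 2) by ring]
          push_cast
          ring
      rw [intervalIntegral.integral_add int1 int2, intervalIntegral.integral_const_mul,
        intervalIntegral.integral_const_mul] at hftc
      norm_num [Real.one_rpow] at hftc
      have hfac : (((n+1).factorial : ℕ) : ℝ) = ((n:ℝ)+1) * n.factorial := by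
        rw [Nat.factorial_succ]; push_cast; ring
      have hpoch : poch lam (n+1+1) = poch lam (n+1) * (lam + n + 1) := by
        rw [poch_succ]; push_cast; ring
      have hfacne : ((n.factorial : ℕ) : ℝ) ≠ 0 := by positivity
      have hn1 : ((n:ℝ)+1) ≠ 0 := by positivity
      have hA' : (∫ t in (0:ℝ)..x, (x - t)^n * (1 - t) ^ (-(lam + n + 1)))
          = (x^(n+1) + (lam+(n:ℝ)+1) * ∫ t in (0:ℝ)..x, (x - t)^(n+1) * (1 - t) ^ (-(lam + n + 2)))
            / ((n:ℝ)+1) := by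
        field_simp
        rw [show (-1 + (-(n:ℝ) + -lam)) = -(lam+n+1) by ring,
          show (-2 + (-(n:ℝ) + -lam)) = -(lam+n+2) by ring] at hftc
        linarith [hftc]
      rw [hA', hpoch, hfac]
      field_simp
    rw [hA]; ring
end binom

lemma summable_aux {lam x : ℝ} (hlam : 0 < lam) (hx0 : 0 ≤ x) (hx1 : x < 1) (a : ℕ) :
    Summable (fun n : ℕ => poch lam (n+a) / n.factorial * x ^ n) := by
  obtain ⟨y, hxy, hy1⟩ : ∃ y, x < y ∧ y < 1 := ⟨(1+x)/2, by linarith, by linarith⟩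
  have hy0 : 0 < y := lt_of_le_of_lt hx0 hxy
  apply summable_of_ratio_norm_eventually_le hy1
  obtain ⟨N, hN⟩ := exists_nat_ge ((lam + a) * x / (y - x))
  filter_upwards [Filter.eventually_ge_atTop N] with n hn
  have hfn : (0:ℝ) ≤ poch lam (n+a) / n.factorial * x ^ n := by
    have := poch_pos hlam (n+a); positivity
  have hfn1 : (0:ℝ) ≤ poch lam (n+1+a) / (n+1).factorial * x ^ (n+1) := by
    have := poch_pos hlam (n+1+a); positivity
  rw [Real.norm_eq_abs, Real.norm_eq_abs, abs_of_nonneg hfn1, abs_of_nonneg hfn]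
  have hpoch : poch lam (n+1+a) = poch lam (n+a) * (lam + ((n:ℝ)+(a:ℝ))) := by
    rw [show n+1+a = (n+a)+1 by ring, poch_succ]; push_cast; ring
  have hfac : (((n+1).factorial : ℕ) : ℝ) = ((n:ℝ)+1) * n.factorial := by
    rw [Nat.factorial_succ]; push_cast; ring
  have hratio : (lam + ((n:ℝ)+(a:ℝ))) * x ≤ ((n:ℝ)+1) * y := by
    have h1 : (lam + a) * x ≤ N * (y - x) := by
      rw [div_le_iff₀ (by linarith)] at hN; linarith
    have h2 : (N:ℝ) ≤ n := Nat.cast_le.mpr hn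
    have h5 : (0:ℝ) ≤ (n:ℝ) := n.cast_nonneg
    nlinarith
  have hP := poch_pos hlam (n+a)
  have hxn : (0:ℝ) ≤ x ^ n := by positivity
  have hfacpos : (0:ℝ) < n.factorial := by positivity
  have step1 : poch lam (n+a) * (lam + ((n:ℝ)+(a:ℝ))) * x / (((n:ℝ)+1) * ↑n.factorial)
      ≤ poch lam (n+a) * (((n:ℝ)+1) * y) / (((n:ℝ)+1) * ↑n.factorial) := by
    apply div_le_div_of_nonneg_right ?_ (by positivity) |>.trans_eq rfl
    · rw [mul_assoc]
      exact mul_le_mul_of_nonneg_left hratio hP.le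
  rw [hpoch, hfac, pow_succ]
  calc poch lam (n+a) * (lam + ((n:ℝ)+(a:ℝ))) / (((n:ℝ)+1) * ↑n.factorial) * (x^n * x)
      = (poch lam (n+a) * (lam + ((n:ℝ)+(a:ℝ))) * x / (((n:ℝ)+1) * ↑n.factorial)) * x^n := by
        ring
    _ ≤ (poch lam (n+a) * (((n:ℝ)+1) * y) / (((n:ℝ)+1) * ↑n.factorial)) * x^n :=
        mul_le_mul_of_nonneg_right step1 hxn
    _ = y * (poch lam (n+a) / ↑n.factorial * x^n) := by
        field_simp

lemma hasSum_binom {lam x : ℝ} (hlam : 0 < lam) (hx0 : 0 ≤ x) (hx1 : x < 1) :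
    HasSum (fun k : ℕ => poch lam k * x ^ k / k.factorial) ((1 - x) ^ (-lam)) := by
  have hnn : ∀ k : ℕ, 0 ≤ poch lam k * x ^ k / k.factorial := fun k => by
    have := poch_pos hlam k; positivity
  rw [hasSum_iff_tendsto_nat_of_nonneg hnn]
  set R : ℕ → ℝ := fun n => poch lam (n+1) / n.factorial *
    ∫ t in (0:ℝ)..x, (x - t)^n * (1 - t) ^ (-(lam + n + 1)) with hRdef
  have hbound : ∀ n, ‖R n‖ ≤ (poch lam (n+1) / n.factorial * x ^ n) * (x * (1-x)^(-(lam+1))) := by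
    intro n
    have hPn := poch_pos hlam (n+1)
    have hconst : ∀ t ∈ uIoc (0:ℝ) x, ‖(x - t)^n * (1 - t) ^ (-(lam + n + 1))‖
        ≤ x^n * (1-x)^(-(lam+1)) := by
      intro t ht
      rw [uIoc_of_le hx0] at ht
      obtain ⟨ht0, htx⟩ := ht
      have h1t : (0:ℝ) < 1 - t := by linarith [lt_of_le_of_lt htx hx1]
      have hxt : (0:ℝ) ≤ x - t := by linarith
      rw [Real.norm_eq_abs, abs_of_nonneg (by positivity)]
      have hsplit : (1 - t) ^ (-(lam + (n:ℝ) + 1)) = ((1-t)^n)⁻¹ * (1-t)^(-(lam+1)) := by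
        rw [show -(lam + (n:ℝ) + 1) = (-(n:ℝ)) + (-(lam+1)) by ring, Real.rpow_add h1t,
          Real.rpow_neg h1t.le, Real.rpow_natCast]
      rw [hsplit]
      have e1 : (x - t)^n * (((1-t)^n)⁻¹ * (1-t)^(-(lam+1)))
          = ((x-t)/(1-t))^n * (1-t)^(-(lam+1)) := by
        rw [div_pow]; ring
      rw [e1]
      have b1 : ((x-t)/(1-t))^n ≤ x^n := by
        apply pow_le_pow_left₀ (by positivity) ?_ n
        rw [div_le_iff₀ h1t]; nlinarith
      have b2 : (1-t)^(-(lam+1)) ≤ (1-x)^(-(lam+1)) :=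
        Real.rpow_le_rpow_of_nonpos (by linarith) (by linarith) (by linarith)
      have hb2pos : (0:ℝ) ≤ (1-t)^(-(lam+1)) := Real.rpow_nonneg h1t.le _
      have hxn : (0:ℝ) ≤ x^n := by positivity
      calc ((x-t)/(1-t))^n * (1-t)^(-(lam+1))
          ≤ x^n * (1-t)^(-(lam+1)) := mul_le_mul_of_nonneg_right b1 hb2pos
        _ ≤ x^n * (1-x)^(-(lam+1)) := mul_le_mul_of_nonneg_left b2 hxn
    have hIb := intervalIntegral.norm_integral_le_of_norm_le_const hconst
    have habs : |x - 0| = x := by rw [sub_zero, abs_of_nonneg hx0]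
    rw [habs] at hIb
    have h1 : ‖R n‖ = (poch lam (n+1) / n.factorial) *
        ‖∫ t in (0:ℝ)..x, (x - t)^n * (1 - t) ^ (-(lam + n + 1))‖ := by
      rw [hRdef]
      simp only []
      rw [norm_mul, Real.norm_eq_abs (poch lam (n+1) / n.factorial),
        abs_of_nonneg (by positivity)]
    rw [h1]
    have := mul_le_mul_of_nonneg_left hIb (le_of_lt (by positivity :
      (0:ℝ) < poch lam (n+1) / n.factorial))
    calc (poch lam (n+1) / n.factorial) * ‖∫ t in (0:ℝ)..x, (x - t)^n * (1 - t) ^ (-(lam + n + 1))‖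
        ≤ (poch lam (n+1) / n.factorial) * (x^n * (1-x)^(-(lam+1)) * x) := this
      _ = (poch lam (n+1) / n.factorial * x ^ n) * (x * (1-x)^(-(lam+1))) := by ring
  have hc : Filter.Tendsto (fun n => (poch lam (n+1)/n.factorial * x^n) * (x*(1-x)^(-(lam+1))))
      Filter.atTop (nhds 0) := by
    have h := (summable_aux hlam hx0 hx1 1).tendsto_atTop_zero
    simpa using h.mul_const (x*(1-x)^(-(lam+1)))
  have hR0 : Filter.Tendsto R Filter.atTop (nhds 0) := squeeze_zero_norm hbound hc
  have hS : Filter.Tendsto (fun n => ∑ k ∈ Finset.range (n+1), poch lam k * x^k/k.factorial)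
      Filter.atTop (nhds ((1-x)^(-lam))) := by
    have heq : (fun n => ∑ k ∈ Finset.range (n+1), poch lam k * x^k/(k.factorial:ℝ))
        = fun n => (1-x)^(-lam) - R n := funext fun n => by
      rw [key_identity hlam hx0 hx1 n]; ring
    rw [heq]
    simpa using (tendsto_const_nhds.sub hR0)
  exact (Filter.tendsto_add_atTop_iff_nat 1).mp hS

lemma contJ {lam : ℝ} (hlam : 0 < lam) (p : ℝ) (hp : 0 ≤ p) (k : ℕ) :
    ContinuousOn (fun u : ℝ => u ^ p * (1 - u ^ (1/lam)) ^ k) (Icc 0 1) := by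
  have h1 : ContinuousOn (fun u : ℝ => u ^ p) (Icc 0 1) :=
    continuousOn_id.rpow_const (fun u _ => Or.inr hp)
  have h2 : ContinuousOn (fun u : ℝ => u ^ (1/lam)) (Icc 0 1) :=
    continuousOn_id.rpow_const (fun u _ => Or.inr (by positivity))
  exact h1.mul ((continuousOn_const.sub h2).pow k)

lemma integral_J {lam : ℝ} (hlam : 0 < lam) (k : ℕ) : ∀ (x : ℝ), 1 ≤ x →
    (∫ u in (0:ℝ)..1, u ^ (x-1) * (1 - u ^ (1/lam)) ^ k)
      = k.factorial * lam / ∏ j ∈ Finset.range (k+1), (lam * x + j) := by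
  induction k with
  | zero =>
    intro x hx
    have hx0 : (0:ℝ) < x := by linarith
    simp only [pow_zero, mul_one, Finset.range_one, Finset.prod_singleton, Nat.cast_zero,
      add_zero, Nat.factorial_zero, Nat.cast_one, one_mul]
    rw [integral_rpow (Or.inl (by linarith : (-1:ℝ) < x - 1))]
    rw [show x - 1 + 1 = x by ring, Real.one_rpow, Real.zero_rpow hx0.ne']
    field_simp
    simp
  | succ k ih =>
    intro x hx
    have hx0 : (0:ℝ) < x := by linarith
    have hil : (0:ℝ) < 1/lam := by positivity
    have hxl : (1:ℝ) ≤ x + 1/lam := by linarith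
    have hsplit : (∫ u in (0:ℝ)..1, u ^ (x-1) * (1 - u ^ (1/lam)) ^ (k+1))
        = (∫ u in (0:ℝ)..1, u ^ (x-1) * (1 - u ^ (1/lam)) ^ k)
          - ∫ u in (0:ℝ)..1, u ^ ((x+1/lam)-1) * (1 - u ^ (1/lam)) ^ k := by
      rw [← intervalIntegral.integral_sub
        ((contJ hlam (x-1) (by linarith) k).intervalIntegrable_of_Icc zero_le_one)
        ((contJ hlam ((x+1/lam)-1) (by linarith) k).intervalIntegrable_of_Icc zero_le_one)]
      apply intervalIntegral.integral_congr
      intro u hu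
      rw [uIcc_of_le zero_le_one] at hu
      dsimp only
      rcases eq_or_lt_of_le hu.1 with h0 | h0
      · rw [← h0]
        rw [Real.zero_rpow (by positivity : (1/lam) ≠ 0)]
        rw [Real.zero_rpow (by linarith : (x+1/lam)-1 ≠ 0)]
        simp
      · have hrw : (0:ℝ) < u := h0
        rw [show (x+1/lam)-1 = (x-1) + 1/lam by ring, Real.rpow_add hrw]
        ring
    rw [hsplit, ih x hx, ih (x+1/lam) (by linarith)]
    have hQeq : (∏ j ∈ Finset.range (k+1), (lam * (x+1/lam) + j))
        = ∏ j ∈ Finset.range (k+1), (lam * x + 1 + j) := by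
      apply Finset.prod_congr rfl
      intro j _
      field_simp
    rw [hQeq]
    have hR1 : (∏ j ∈ Finset.range (k+2), (lam * x + j))
        = (∏ j ∈ Finset.range (k+1), (lam * x + j)) * (lam * x + (k+1)) := by
      rw [Finset.prod_range_succ]; push_cast; ring
    have hR2 : (∏ j ∈ Finset.range (k+2), (lam * x + j))
        = (lam * x) * ∏ j ∈ Finset.range (k+1), (lam * x + 1 + j) := by
      rw [Finset.prod_range_succ']
      rw [mul_comm]
      congr 1
      · push_cast; ring
      · apply Finset.prod_congr rfl; intro j _; push_cast; ring
    have hPpos : (0:ℝ) < ∏ j ∈ Finset.range (k+1), (lam * x + j) :=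
      Finset.prod_pos fun j _ => by positivity
    have hQpos : (0:ℝ) < ∏ j ∈ Finset.range (k+1), (lam * x + 1 + j) :=
      Finset.prod_pos fun j _ => by positivity
    have hRpos : (0:ℝ) < ∏ j ∈ Finset.range (k+2), (lam * x + j) :=
      Finset.prod_pos fun j _ => by positivity
    have hfact : (((k+1).factorial : ℕ) : ℝ) = ((k:ℝ)+1) * k.factorial := by
      rw [Nat.factorial_succ]; push_cast; ring
    rw [div_sub_div _ _ hPpos.ne' hQpos.ne', div_eq_div_iff (by positivity) hRpos.ne']
    linear_combination ((k.factorial:ℝ)*lam*(∏ j ∈ Finset.range (k+1), (lam * x + 1 + j))) * hR1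
      - ((k.factorial:ℝ)*lam*(∏ j ∈ Finset.range (k+1), (lam * x + j))) * hR2
      - lam*(∏ j ∈ Finset.range (k+1), (lam * x + j))*(∏ j ∈ Finset.range (k+1), (lam * x + 1 + j))*hfact

lemma poch_prod (a : ℝ) (n : ℕ) : poch a n = ∏ j ∈ Finset.range n, (a + j) := by
  induction n with
  | zero => simp [poch_zero]
  | succ k ih => rw [poch_succ, ih, Finset.prod_range_succ]

lemma integral_I {L : ℝ} (hL : 0 < L) (k : ℕ) :
    (∫ u in (0:ℝ)..1, u * (1 - u ^ (1/L)) ^ k) = k.factorial / (2 * poch (2*L+1) k) := by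
  have h := integral_J hL k 2 one_le_two
  have hcongr : (∫ u in (0:ℝ)..1, u * (1 - u ^ (1/L)) ^ k)
      = ∫ u in (0:ℝ)..1, u ^ ((2:ℝ)-1) * (1 - u ^ (1/L)) ^ k := by
    apply intervalIntegral.integral_congr
    intro u _
    norm_num
  rw [hcongr, h]
  have hprod : (∏ j ∈ Finset.range (k+1), (L*2 + (j:ℝ))) = (L*2) * poch (L*2+1) k := by
    rw [← poch_prod, poch_succ_left]
  rw [hprod]
  have he : L*2+1 = 2*L+1 := by ring
  rw [he]
  have hp := poch_pos (show (0:ℝ) < 2*L+1 by linarith) k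
  field_simp

lemma swap_helper (f : ℕ → ℝ → ℝ) (c : ℕ → ℝ) (hc : Summable c)
    (hm : ∀ k, AEStronglyMeasurable (f k) (volume.restrict (Ioc (0:ℝ) 1)))
    (hb : ∀ k, ∀ x ∈ Ioc (0:ℝ) 1, |f k x| ≤ c k) :
    ∫ x in Ioc (0:ℝ) 1, (∑' k, f k x) = ∑' k, ∫ x in Ioc (0:ℝ) 1, f k x := by
  have hc0 : ∀ k, 0 ≤ c k := fun k => (abs_nonneg _).trans (hb k 1 ⟨zero_lt_one, le_refl 1⟩)
  refine MeasureTheory.integral_tsum hm ?_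
  have hle : ∀ k, (∫⁻ x in Ioc (0:ℝ) 1, ‖f k x‖₊) ≤ ENNReal.ofReal (c k) := by
    intro k
    have h1 : (∫⁻ x in Ioc (0:ℝ) 1, ‖f k x‖₊)
        ≤ ∫⁻ _x in Ioc (0:ℝ) 1, ENNReal.ofReal (c k) := by
      apply lintegral_mono_ae
      rw [ae_restrict_iff' measurableSet_Ioc]
      filter_upwards with x hx
      rw [show (‖f k x‖₊ : ENNReal) = ENNReal.ofReal |f k x| from Real.enorm_eq_ofReal_abs _]
      exact ENNReal.ofReal_le_ofReal (hb k x hx)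
    rw [MeasureTheory.lintegral_const, Measure.restrict_apply_univ, Real.volume_Ioc] at h1
    simpa using h1
  refine ne_of_lt (lt_of_le_of_lt (ENNReal.tsum_le_tsum hle) ?_)
  rw [← ENNReal.ofReal_tsum_of_nonneg hc0 hc]
  exact ENNReal.ofReal_lt_top

lemma contMul {L : ℝ} (hL : 0 < L) (k : ℕ) :
    ContinuousOn (fun v : ℝ => v * (1 - v ^ (1/L)) ^ k) (Icc 0 1) := by
  have h2 : ContinuousOn (fun u : ℝ => u ^ (1/L)) (Icc (0:ℝ) 1) :=
    continuousOn_id.rpow_const (fun u _ => Or.inr (by positivity))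
  exact continuousOn_id.mul ((continuousOn_const.sub h2).pow k)

theorem spearman_rho_of_copula (lam lam₁ lam₂ r : ℝ)
    (hlam : 0 < lam) (hlam₁ : lam ≤ lam₁) (hlam₂ : lam ≤ lam₂)
    (hr0 : 0 ≤ r) (hr1 : r < 1)
    (C : ℝ → ℝ → ℝ)
    (hC : ∀ v₁ v₂ : ℝ, C v₁ v₂ =
      v₁ * v₂ * (1 - r * (1 - v₁ ^ (1 / lam₁)) * (1 - v₂ ^ (1 / lam₂))) ^ (-lam)) :
    (12 * (∫ u in (0:ℝ)..1, ∫ v in (0:ℝ)..1, C u v) - 3 =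
        3 * (F32 1 1 lam (2 * lam₁ + 1) (2 * lam₂ + 1) r - 1)) ∧
    (3 * (F32 1 1 lam (2 * lam₁ + 1) (2 * lam₂ + 1) r - 1) =
        3 * lam / ((2 * lam₁ + 1) * (2 * lam₂ + 1)) * r *
          F32 1 2 (lam + 1) (2 * lam₁ + 2) (2 * lam₂ + 2) r) := by
  have hL1 : 0 < lam₁ := lt_of_lt_of_le hlam hlam₁
  have hL2 : 0 < lam₂ := lt_of_lt_of_le hlam hlam₂
  have hb₁ : (0:ℝ) < 2*lam₁+1 := by linarith
  have hb₂ : (0:ℝ) < 2*lam₂+1 := by linarith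
  -- facts for u in Ioc 0 1
  have hfa : ∀ (L : ℝ), 0 < L → ∀ u ∈ Ioc (0:ℝ) 1,
      0 ≤ 1 - u ^ (1/L) ∧ 1 - u ^ (1/L) < 1 := by
    intro L hL u hu
    have h1 : 0 < u ^ (1/L) := Real.rpow_pos_of_pos hu.1 _
    have h2 : u ^ (1/L) ≤ 1 := Real.rpow_le_one hu.1.le hu.2 (by positivity)
    exact ⟨by linarith, by linarith⟩
  have hSummR : Summable (fun k : ℕ => poch lam k * r ^ k / k.factorial) :=
    (hasSum_binom hlam hr0 hr1).summable
  have hRnn : ∀ k : ℕ, 0 ≤ poch lam k * r ^ k / k.factorial := fun k => by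
    have := poch_pos hlam k; positivity
  -- the inner integrals (in v)
  set I₂ : ℕ → ℝ := fun k => ∫ v in (0:ℝ)..1, v * (1 - v ^ (1/lam₂)) ^ k with hI₂def
  have hI₂val : ∀ k, I₂ k = k.factorial / (2 * poch (2*lam₂+1) k) := fun k => integral_I hL2 k
  have hI₂pos : ∀ k, 0 < I₂ k := by
    intro k; rw [hI₂val k]
    have := poch_pos hb₂ k
    have : (0:ℝ) < k.factorial := by positivity
    have := poch_pos hb₂ k
    positivity
  have hI₂le : ∀ k, I₂ k ≤ 1 := by
    intro k; rw [hI₂val k]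
    have hp := poch_pos hb₂ k
    rw [div_le_one (by positivity)]
    have h1 : (k.factorial : ℝ) ≤ poch (2*lam₂+1) k := by
      rw [← poch_one]; exact poch_mono one_pos (by linarith) k
    nlinarith [hp]
  set I₁ : ℕ → ℝ := fun k => ∫ u in (0:ℝ)..1, u * (1 - u ^ (1/lam₁)) ^ k with hI₁def
  have hI₁val : ∀ k, I₁ k = k.factorial / (2 * poch (2*lam₁+1) k) := fun k => integral_I hL1 k
  -- Step 1 : inner expansion
  have hInner : ∀ u ∈ Ioc (0:ℝ) 1, (∫ v in (0:ℝ)..1, C u v)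
      = ∑' k : ℕ, (poch lam k * r ^ k / k.factorial * I₂ k) * (u * (1 - u ^ (1/lam₁)) ^ k) := by
    intro u hu
    obtain ⟨ha0, ha1⟩ := hfa lam₁ hL1 u hu
    have hu0 : 0 < u := hu.1
    have hu1 : u ≤ 1 := hu.2
    rw [intervalIntegral.integral_of_le zero_le_one]
    have hpt : EqOn (fun v => C u v)
        (fun v => ∑' k : ℕ, (poch lam k * r ^ k / k.factorial * (u * (1 - u ^ (1/lam₁)) ^ k))
          * (v * (1 - v ^ (1/lam₂)) ^ k)) (Ioc (0:ℝ) 1) := by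
      intro v hv
      obtain ⟨hb0, hb1⟩ := hfa lam₂ hL2 v hv
      have hv0 : 0 < v := hv.1
      have hv1 : v ≤ 1 := hv.2
      have hxx0 : 0 ≤ r * (1 - u ^ (1/lam₁)) * (1 - v ^ (1/lam₂)) := by positivity
      have hxx1 : r * (1 - u ^ (1/lam₁)) * (1 - v ^ (1/lam₂)) < 1 := by
        have h5 : r * (1 - u ^ (1/lam₁)) ≤ r := mul_le_of_le_one_right hr0 ha1.le
        have h6 : r * (1 - u ^ (1/lam₁)) * (1 - v ^ (1/lam₂)) ≤ r * (1 - u ^ (1/lam₁)) :=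
          mul_le_of_le_one_right (mul_nonneg hr0 ha0) hb1.le
        linarith
      have hs := (hasSum_binom hlam hxx0 hxx1).mul_left (u*v)
      simp only []
      rw [hC u v, ← hs.tsum_eq]
      apply tsum_congr
      intro k
      rw [mul_pow, mul_pow]
      ring
    rw [setIntegral_congr_fun measurableSet_Ioc hpt]
    rw [swap_helper _ (fun k => poch lam k * r ^ k / k.factorial) hSummR ?_ ?_]
    · apply tsum_congr
      intro k
      rw [MeasureTheory.integral_const_mul, ← intervalIntegral.integral_of_le zero_le_one]
      show _ * I₂ k = _
      ring
    · intro k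
      apply ContinuousOn.aestronglyMeasurable ?_ measurableSet_Ioc
      exact (continuousOn_const.mul ((contMul hL2 k).mono Ioc_subset_Icc_self))
    · intro k v hv
      obtain ⟨hb0, hb1⟩ := hfa lam₂ hL2 v hv
      have hv0 : 0 < v := hv.1
      have hv1 : v ≤ 1 := hv.2
      have hcnn := hRnn k
      rw [abs_of_nonneg (by positivity)]
      have h1 : u * (1 - u ^ (1/lam₁)) ^ k ≤ 1 := by
        have : (1 - u ^ (1/lam₁)) ^ k ≤ 1 := pow_le_one₀ ha0 (by linarith)
        nlinarith
      have h2 : v * (1 - v ^ (1/lam₂)) ^ k ≤ 1 := by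
        have : (1 - v ^ (1/lam₂)) ^ k ≤ 1 := pow_le_one₀ hb0 (by linarith)
        nlinarith
      have h3 : 0 ≤ u * (1 - u ^ (1/lam₁)) ^ k := by positivity
      have h5 : poch lam k * r ^ k / k.factorial * (u * (1 - u ^ (1/lam₁)) ^ k)
          ≤ poch lam k * r ^ k / k.factorial := mul_le_of_le_one_right hcnn h1
      have h6 : poch lam k * r ^ k / k.factorial * (u * (1 - u ^ (1/lam₁)) ^ k)
            * (v * (1 - v ^ (1/lam₂)) ^ k)
          ≤ poch lam k * r ^ k / k.factorial * (u * (1 - u ^ (1/lam₁)) ^ k) :=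
        mul_le_of_le_one_right (mul_nonneg hcnn h3) h2
      linarith
  have hOuter : (∫ u in (0:ℝ)..1, ∫ v in (0:ℝ)..1, C u v)
      = ∑' k : ℕ, (poch lam k * r ^ k / k.factorial * I₂ k) * I₁ k := by
    rw [intervalIntegral.integral_of_le zero_le_one]
    rw [setIntegral_congr_fun measurableSet_Ioc (fun u hu => hInner u hu)]
    rw [swap_helper _ (fun k => poch lam k * r ^ k / k.factorial * I₂ k) ?_ ?_ ?_]
    · apply tsum_congr
      intro k
      rw [MeasureTheory.integral_const_mul, ← intervalIntegral.integral_of_le zero_le_one]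
    · apply Summable.of_nonneg_of_le (fun k => mul_nonneg (hRnn k) (hI₂pos k).le)
        (fun k => mul_le_of_le_one_right (hRnn k) (hI₂le k)) hSummR
    · intro k
      apply ContinuousOn.aestronglyMeasurable ?_ measurableSet_Ioc
      exact continuousOn_const.mul ((contMul hL1 k).mono Ioc_subset_Icc_self)
    · intro k u hu
      obtain ⟨ha0, ha1⟩ := hfa lam₁ hL1 u hu
      have hu0 : 0 < u := hu.1
      have hu1 : u ≤ 1 := hu.2
      have hcnn : 0 ≤ poch lam k * r ^ k / k.factorial * I₂ k :=
        mul_nonneg (hRnn k) (hI₂pos k).le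
      rw [abs_of_nonneg (by positivity)]
      have h1 : u * (1 - u ^ (1/lam₁)) ^ k ≤ 1 := by
        have : (1 - u ^ (1/lam₁)) ^ k ≤ 1 := pow_le_one₀ ha0 (by linarith)
        nlinarith
      exact mul_le_of_le_one_right hcnn h1
  -- value of the double integral
  have hF : (∫ u in (0:ℝ)..1, ∫ v in (0:ℝ)..1, C u v) * 4
      = F32 1 1 lam (2*lam₁+1) (2*lam₂+1) r := by
    rw [hOuter]
    rw [show F32 1 1 lam (2*lam₁+1) (2*lam₂+1) r = ∑' k : ℕ,
      (poch 1 k * poch 1 k * poch lam k) / (poch (2*lam₁+1) k * poch (2*lam₂+1) k)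
        * r ^ k / k.factorial from rfl]
    rw [← tsum_mul_right]
    apply tsum_congr
    intro k
    rw [hI₁val k, hI₂val k, poch_one]
    have hp₁ := poch_pos hb₁ k
    have hp₂ := poch_pos hb₂ k
    have hfk : (0:ℝ) < k.factorial := by positivity
    field_simp
    ring
  constructor
  · linarith [hF]
  · -- second identity
    set f : ℕ → ℝ := fun k => (poch 1 k * poch 1 k * poch lam k)
        / (poch (2*lam₁+1) k * poch (2*lam₂+1) k) * r ^ k / k.factorial with hfdef
    have hf0 : ∀ k, 0 ≤ f k := by
      intro k
      have h1 := poch_pos hlam k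
      have h2 := poch_pos hb₁ k
      have h3 := poch_pos hb₂ k
      have h4 := poch_pos one_pos k
      rw [hfdef]
      positivity
    have hfle : ∀ k, f k ≤ r ^ k := by
      intro k
      have h1 : poch lam k ≤ poch (2*lam₁+1) k := poch_mono hlam (by linarith) k
      have h2 : (k.factorial:ℝ) ≤ poch (2*lam₂+1) k := by
        rw [← poch_one]; exact poch_mono one_pos (by linarith) k
      have hp₁ := poch_pos hb₁ k
      have hp₂ := poch_pos hb₂ k
      have hfk : (0:ℝ) < k.factorial := by positivity
      rw [hfdef]
      simp only [poch_one]
      rw [div_mul_eq_mul_div, div_div, div_le_iff₀ (by positivity)]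
      have key : (k.factorial:ℝ) * k.factorial * poch lam k
          ≤ poch (2*lam₁+1) k * poch (2*lam₂+1) k * k.factorial := by
        have h5 : poch lam k * (k.factorial:ℝ) ≤ poch (2*lam₁+1) k * poch (2*lam₂+1) k :=
          mul_le_mul h1 h2 hfk.le hp₁.le
        nlinarith [poch_pos hlam k]
      have := mul_le_mul_of_nonneg_right key (pow_nonneg hr0 k)
      nlinarith [this]
    have hsumf : Summable f :=
      Summable.of_nonneg_of_le hf0 hfle (summable_geometric_of_lt_one hr0 hr1)
    have hshift : F32 1 1 lam (2*lam₁+1) (2*lam₂+1) r = 1 + ∑' k : ℕ, f (k+1) := by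
      rw [show F32 1 1 lam (2*lam₁+1) (2*lam₂+1) r = ∑' k, f k from rfl,
        Summable.tsum_eq_zero_add hsumf]
      congr 1
      rw [hfdef]
      simp [poch_zero]
    have hstep : ∀ k : ℕ, f (k+1) = (lam * r/((2*lam₁+1)*(2*lam₂+1)))
        * ((poch 1 k * poch 2 k * poch (lam+1) k)
          / (poch (2*lam₁+2) k * poch (2*lam₂+2) k) * r ^ k / k.factorial) := by
      intro k
      rw [hfdef]
      simp only []
      rw [poch_succ_left 1, poch_succ_left lam, poch_succ_left (2*lam₁+1),
        poch_succ_left (2*lam₂+1)]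
      rw [show (1:ℝ)+1 = 2 by norm_num, show 2*lam₁+1+1 = 2*lam₁+2 by ring,
        show 2*lam₂+1+1 = 2*lam₂+2 by ring]
      rw [pow_succ, poch_one, poch_two]
      have hfs : (((k+1).factorial:ℕ):ℝ) = ((k:ℝ)+1)*k.factorial := by
        rw [Nat.factorial_succ]; push_cast; ring
      rw [hfs]
      have hq₁ := poch_pos (show (0:ℝ) < 2*lam₁+2 by linarith) k
      have hq₂ := poch_pos (show (0:ℝ) < 2*lam₂+2 by linarith) k
      have hfk : (0:ℝ) < k.factorial := by positivity
      have hfk1 : (0:ℝ) < ((k+1).factorial : ℕ) := by positivity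
      have h3 : (0:ℝ) < (k:ℝ)+1 := by positivity
      field_simp
    have hsum2 : (∑' k : ℕ, f (k+1)) = (lam * r/((2*lam₁+1)*(2*lam₂+1)))
        * F32 1 2 (lam+1) (2*lam₁+2) (2*lam₂+2) r := by
      rw [show F32 1 2 (lam+1) (2*lam₁+2) (2*lam₂+2) r = ∑' k : ℕ,
        ((poch 1 k * poch 2 k * poch (lam+1) k)
          / (poch (2*lam₁+2) k * poch (2*lam₂+2) k) * r ^ k / k.factorial) from rfl,
        ← tsum_mul_left]
      exact tsum_congr hstep
    rw [hshift, hsum2]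
    ring
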